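/- In a group G of exponent 3, every triple commutator ((a,b),c) is central and ((a,b),(c,d)) = 1 for all a,b,c,d ∈ G; moreover ((a,b),c) is alternating: it transforms by the sign character under permutations of a, b, c. -/

import Mathlib

open scoped commutatorElement

/- Auxiliary lemmas: groups of exponent 3 are 2-Engel and nilpotent of class ≤ 3 (Levi/Burnside).
   We develop the needed element-level identities. -/

section Aux

variable {G : Type*} [Group G]

private lemma cube3 (hexp : ∀ x : G, x ^ 3 = 1) (a : G) : a * a * a = 1 := by
  have h := hexp a
  rwa [pow_succ, pow_succ, pow_one] at h

private lemma sq3 (hexp : ∀ x : G, x ^ 3 = 1) (a : G) : a * a = a⁻¹ := by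
  calc a * a = (a * a * a) * a⁻¹ := by group
    _ = a⁻¹ := by rw [cube3 hexp a, one_mul]

private lemma invsq3 (hexp : ∀ x : G, x ^ 3 = 1) (a : G) : a⁻¹ * a⁻¹ = a := by
  rw [sq3 hexp a⁻¹, inv_inv]

private lemma Rlem (hexp : ∀ x : G, x ^ 3 = 1) (a b : G) :
    a * b * a = b⁻¹ * a⁻¹ * b⁻¹ := by
  have h := cube3 hexp (a * b)
  calc a * b * a = ((a * b) * (a * b) * (a * b)) * (b⁻¹ * a⁻¹ * b⁻¹) := by group
    _ = b⁻¹ * a⁻¹ * b⁻¹ := by rw [h, one_mul]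

/-- 2-Engel identity. -/
private lemma E2 (hexp : ∀ x : G, x ^ 3 = 1) (x y : G) : ⁅⁅x, y⁆, y⁆ = 1 := by
  simp only [commutatorElement_def]
  calc (x * y * x⁻¹ * y⁻¹) * y * (x * y * x⁻¹ * y⁻¹)⁻¹ * y⁻¹
      = x * (y * x⁻¹ * y) * (x * y⁻¹ * x⁻¹ * y⁻¹) := by group
    _ = x * (x⁻¹⁻¹ * y⁻¹ * x⁻¹⁻¹) * (x * y⁻¹ * x⁻¹ * y⁻¹) := by rw [Rlem hexp y x⁻¹]
    _ = (x * x) * y⁻¹ * (x * x) * y⁻¹ * x⁻¹ * y⁻¹ := by group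
    _ = x⁻¹ * y⁻¹ * x⁻¹ * y⁻¹ * x⁻¹ * y⁻¹ := by rw [sq3 hexp x]
    _ = (x⁻¹ * y⁻¹) * (x⁻¹ * y⁻¹) * (x⁻¹ * y⁻¹) := by group
    _ = 1 := cube3 hexp _

private lemma commOfComm {p q : G} (h : ⁅p, q⁆ = 1) : p * q = q * p := by
  rw [commutatorElement_def] at h
  calc p * q = (p * q * p⁻¹ * q⁻¹) * (q * p) := by group
    _ = q * p := by rw [h, one_mul]

private lemma E2' (hexp : ∀ x : G, x ^ 3 = 1) (x y : G) : ⁅⁅x, y⁆, x⁆ = 1 := by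
  have h : ⁅y, x⁆ * x = x * ⁅y, x⁆ := commOfComm (E2 hexp y x)
  have h2 : x * ⁅y, x⁆⁻¹ = ⁅y, x⁆⁻¹ * x := by
    have := congrArg Inv.inv h
    rw [mul_inv_rev, mul_inv_rev] at this
    calc x * ⁅y, x⁆⁻¹ = x * (⁅y, x⁆⁻¹ * x⁻¹) * x := by group
      _ = x * (x⁻¹ * ⁅y, x⁆⁻¹) * x := by rw [← this]
      _ = ⁅y, x⁆⁻¹ * x := by group
  calc ⁅⁅x, y⁆, x⁆ = (⁅y, x⁆⁻¹ * x) * ⁅y, x⁆ * x⁻¹ := by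
        simp only [commutatorElement_def]; group
    _ = (x * ⁅y, x⁆⁻¹) * ⁅y, x⁆ * x⁻¹ := by rw [← h2]
    _ = 1 := by group

/-- right-inverse rule for commutators. -/
private lemma inv_right3 (hexp : ∀ x : G, x ^ 3 = 1) (x u : G) :
    ⁅x, u⁻¹⁆ = ⁅x, u⁆⁻¹ := by
  have h : ⁅x, u⁆ * u = u * ⁅x, u⁆ := commOfComm (E2 hexp x u)
  have h2 : u⁻¹ * ⁅x, u⁆⁻¹ = ⁅x, u⁆⁻¹ * u⁻¹ := by
    have := congrArg Inv.inv h
    rwa [mul_inv_rev, mul_inv_rev] at this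
  calc ⁅x, u⁻¹⁆ = (u⁻¹ * ⁅x, u⁆⁻¹) * u := by
        simp only [commutatorElement_def]; group
    _ = (⁅x, u⁆⁻¹ * u⁻¹) * u := by rw [h2]
    _ = ⁅x, u⁆⁻¹ := by group

/-- left-inverse rule for commutators. -/
private lemma inv_left3 (hexp : ∀ x : G, x ^ 3 = 1) (u c : G) :
    ⁅u⁻¹, c⁆ = ⁅u, c⁆⁻¹ := by
  have h : ⁅u, c⁆ * u = u * ⁅u, c⁆ := commOfComm (E2' hexp u c)
  have h2 : u⁻¹ * ⁅u, c⁆⁻¹ = ⁅u, c⁆⁻¹ * u⁻¹ := by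
    have := congrArg Inv.inv h
    rwa [mul_inv_rev, mul_inv_rev] at this
  calc ⁅u⁻¹, c⁆ = (u⁻¹ * ⁅u, c⁆⁻¹) * u := by
        simp only [commutatorElement_def]; group
    _ = (⁅u, c⁆⁻¹ * u⁻¹) * u := by rw [h2]
    _ = ⁅u, c⁆⁻¹ := by group

/-- the basic relation `a ⬝ aˢ⁻¹ ⬝ aˢ = 1` (conjugation action satisfies 1 + g + g⁻¹ = 0). -/
private lemma M1 (hexp : ∀ x : G, x ^ 3 = 1) (a s : G) :
    a * (s⁻¹ * a * s) * (s * a * s⁻¹) = 1 := by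
  calc a * (s⁻¹ * a * s) * (s * a * s⁻¹) = a * s⁻¹ * a * (s * s) * a * s⁻¹ := by group
    _ = a * s⁻¹ * a * s⁻¹ * a * s⁻¹ := by rw [sq3 hexp s]
    _ = (a * s⁻¹) * (a * s⁻¹) * (a * s⁻¹) := by group
    _ = 1 := cube3 hexp _

private lemma conj_comm_lemma (g : G) {x y : G} (h : x * y = y * x) :
    (g * x * g⁻¹) * (g * y * g⁻¹) = (g * y * g⁻¹) * (g * x * g⁻¹) := by
  calc (g * x * g⁻¹) * (g * y * g⁻¹) = g * (x * y) * g⁻¹ := by group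
    _ = g * (y * x) * g⁻¹ := by rw [h]
    _ = (g * y * g⁻¹) * (g * x * g⁻¹) := by group

private lemma m2 (hexp : ∀ x : G, x ^ 3 = 1) (a s : G) :
    (s⁻¹ * a * s) * (s * a * s⁻¹) = (s * a * s⁻¹) * (s⁻¹ * a * s) := by
  have h1 := M1 hexp a s
  have h2 := M1 hexp a s⁻¹
  rw [inv_inv] at h2
  have e1 : (s⁻¹ * a * s) * (s * a * s⁻¹) = a⁻¹ := by
    calc (s⁻¹ * a * s) * (s * a * s⁻¹)
        = a⁻¹ * (a * (s⁻¹ * a * s) * (s * a * s⁻¹)) := by group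
      _ = a⁻¹ := by rw [h1, mul_one]
  have e2 : (s * a * s⁻¹) * (s⁻¹ * a * s) = a⁻¹ := by
    calc (s * a * s⁻¹) * (s⁻¹ * a * s)
        = a⁻¹ * (a * (s * a * s⁻¹) * (s⁻¹ * a * s)) := by group
      _ = a⁻¹ := by rw [h2, mul_one]
  rw [e1, e2]

private lemma m3 (hexp : ∀ x : G, x ^ 3 = 1) (a k : G) :
    a * (k⁻¹ * a * k) = (k⁻¹ * a * k) * a := by
  have h2 := conj_comm_lemma k (m2 hexp a k)
  have t1 : k * (k⁻¹ * a * k) * k⁻¹ = a := by group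
  have t2 : k * (k * a * k⁻¹) * k⁻¹ = k⁻¹ * a * k := by
    calc k * (k * a * k⁻¹) * k⁻¹ = (k * k) * a * (k * k)⁻¹ := by group
      _ = k⁻¹ * a * k⁻¹⁻¹ := by rw [sq3 hexp k]
      _ = k⁻¹ * a * k := by rw [inv_inv]
  calc a * (k⁻¹ * a * k)
      = (k * (k⁻¹ * a * k) * k⁻¹) * (k * (k * a * k⁻¹) * k⁻¹) := by rw [t1, t2]
    _ = (k * (k * a * k⁻¹) * k⁻¹) * (k * (k⁻¹ * a * k) * k⁻¹) := h2
    _ = (k⁻¹ * a * k) * a := by rw [t1, t2]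

/-- all conjugates of an element commute. -/
private lemma conj_pairwise (hexp : ∀ x : G, x ^ 3 = 1) (x g h : G) :
    (g * x * g⁻¹) * (h * x * h⁻¹) = (h * x * h⁻¹) * (g * x * g⁻¹) := by
  have e := m3 hexp x (h⁻¹ * g)
  have e2 := conj_comm_lemma g e
  calc (g * x * g⁻¹) * (h * x * h⁻¹)
      = (g * x * g⁻¹) * (g * ((h⁻¹ * g)⁻¹ * x * (h⁻¹ * g)) * g⁻¹) := by group
    _ = (g * ((h⁻¹ * g)⁻¹ * x * (h⁻¹ * g)) * g⁻¹) * (g * x * g⁻¹) := e2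
    _ = (h * x * h⁻¹) * (g * x * g⁻¹) := by group

private lemma addify {M : Type*} [Monoid M] {p q r : M} (h : p * q * r = 1) :
    Additive.ofMul p + Additive.ofMul q + Additive.ofMul r = 0 := by
  rw [← ofMul_mul, ← ofMul_mul, h, ofMul_one]

private lemma abstract_add {H : Type*} [AddCommGroup H]
    (x b c bc cb bc' b' cb' bcb' b'cb' c'b b'c k : H)
    (RA : bc' + b'cb' + k = 0)
    (RB : x + bc' + bc = 0)
    (RC : cb' + b'cb' + bcb' = 0)
    (RD : b' + bc' + cb' = 0)
    (RE : x + b' + b = 0)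
    (RG : b' + c'b + bcb' = 0)
    (RH : b + cb + c'b = 0)
    (RW : x + c'b + b'c = 0)
    (RI : c + b'c + bc = 0)
    (Tb : b + b + b = 0) (Tc : c + c + c = 0)
    (Tbc : bc + bc + bc = 0) (Tcb : cb + cb + cb = 0) :
    -b + cb + -c = -k := by
  have expand : (-b + cb + -c) - (-k) =
      (bc' + b'cb' + k) - (2 : ℤ) • (x + bc' + bc) - (cb' + b'cb' + bcb')
        + (b' + bc' + cb') - (2 : ℤ) • (x + b' + b) + (b' + c'b + bcb')
        - (5 : ℤ) • (b + cb + c'b) + (4 : ℤ) • (x + c'b + b'c)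
        - (4 : ℤ) • (c + b'c + bc)
        + (2 : ℤ) • (b + b + b) + (c + c + c) + (2 : ℤ) • (bc + bc + bc)
        + (2 : ℤ) • (cb + cb + cb) := by abel
  rw [RA, RB, RC, RD, RE, RG, RH, RW, RI, Tb, Tc, Tbc, Tcb] at expand
  simp only [smul_zero, sub_zero, add_zero, zero_add] at expand
  exact sub_eq_zero.mp expand

/-- KEY identity: `⁅⁅x,b⁆,c⁆ = ⁅x,⁅c,b⁆⁆` in exponent-3 groups. -/
private lemma P1 (hexp : ∀ x : G, x ^ 3 = 1) (x b c : G) :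
    ⁅⁅x, b⁆, c⁆ = ⁅x, ⁅c, b⁆⁆ := by
  -- the abelian normal closure of x
  set S : Set G := Set.range (fun g => g * x * g⁻¹) with hS
  set A : Subgroup G := Subgroup.closure S with hA
  have hmemS : ∀ w : G, w * x * w⁻¹ ∈ S := fun w => ⟨w, rfl⟩
  have h1 : A ≤ Subgroup.centralizer S := by
    rw [hA]
    refine (Subgroup.closure_le _).mpr ?_
    intro s hs
    rw [SetLike.mem_coe, Subgroup.mem_centralizer_iff]
    intro t ht
    obtain ⟨g, rfl⟩ := hs
    obtain ⟨h, rfl⟩ := ht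
    exact conj_pairwise hexp x h g
  have h2 : A ≤ Subgroup.centralizer (A : Set G) := by
    conv_lhs => rw [hA]
    refine (Subgroup.closure_le _).mpr ?_
    intro s hs
    rw [SetLike.mem_coe, Subgroup.mem_centralizer_iff]
    intro a ha
    exact (Subgroup.mem_centralizer_iff.mp (h1 ha) s hs).symm
  have commA : ∀ p q : A, (p : G) * (q : G) = (q : G) * (p : G) := by
    intro p q
    exact Subgroup.mem_centralizer_iff.mp (h2 q.2) (p : G) p.2
  letI : CommGroup A := { (inferInstance : Group A) with
    mul_comm := fun p q => Subtype.ext (commA p q) }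
  let ξ : G → A := fun w => ⟨w * x * w⁻¹, Subgroup.subset_closure (hmemS w)⟩
  have hstar : ∀ s w : G, ξ w * ξ (s⁻¹ * w) * ξ (s * w) = 1 := by
    intro s w
    apply Subtype.ext
    show (w * x * w⁻¹) * ((s⁻¹ * w) * x * (s⁻¹ * w)⁻¹) * ((s * w) * x * (s * w)⁻¹) = 1
    calc (w * x * w⁻¹) * ((s⁻¹ * w) * x * (s⁻¹ * w)⁻¹) * ((s * w) * x * (s * w)⁻¹)
        = (w * x * w⁻¹) * (s⁻¹ * (w * x * w⁻¹) * s) * (s * (w * x * w⁻¹) * s⁻¹) := by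
          group
      _ = 1 := M1 hexp _ s
  have hcube : ∀ w : G, ξ w * ξ w * ξ w = 1 := by
    intro w
    apply Subtype.ext
    show (w * x * w⁻¹) * (w * x * w⁻¹) * (w * x * w⁻¹) = 1
    exact cube3 hexp _
  -- the nine instances of hstar
  have RAm : ξ ((b * c)⁻¹) * ξ (b⁻¹ * c * b⁻¹) * ξ (c * b * c⁻¹ * b⁻¹) = 1 := by
    have h := hstar (c * b) ((b * c)⁻¹)
    have e1 : (c * b)⁻¹ * (b * c)⁻¹ = b⁻¹ * c * b⁻¹ := by
      calc (c * b)⁻¹ * (b * c)⁻¹ = b⁻¹ * (c⁻¹ * c⁻¹) * b⁻¹ := by group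
        _ = b⁻¹ * c * b⁻¹ := by rw [invsq3 hexp c]
    have e2 : (c * b) * (b * c)⁻¹ = c * b * c⁻¹ * b⁻¹ := by group
    rwa [e1, e2] at h
  have RBm : ξ 1 * ξ ((b * c)⁻¹) * ξ (b * c) = 1 := by
    have h := hstar (b * c) 1
    rwa [mul_one, mul_one] at h
  have RCm : ξ (c * b⁻¹) * ξ (b⁻¹ * c * b⁻¹) * ξ (b * c * b⁻¹) = 1 := by
    have h := hstar b (c * b⁻¹)
    have e1 : b⁻¹ * (c * b⁻¹) = b⁻¹ * c * b⁻¹ := by group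
    have e2 : b * (c * b⁻¹) = b * c * b⁻¹ := by group
    rwa [e1, e2] at h
  have RDm : ξ b⁻¹ * ξ ((b * c)⁻¹) * ξ (c * b⁻¹) = 1 := by
    have h := hstar c b⁻¹
    have e1 : c⁻¹ * b⁻¹ = (b * c)⁻¹ := by group
    rwa [e1] at h
  have REm : ξ 1 * ξ b⁻¹ * ξ b = 1 := by
    have h := hstar b 1
    rwa [mul_one, mul_one] at h
  have RGm : ξ b⁻¹ * ξ (c⁻¹ * b) * ξ (b * c * b⁻¹) = 1 := by
    have h := hstar (b * c) b⁻¹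
    have e1 : (b * c)⁻¹ * b⁻¹ = c⁻¹ * (b⁻¹ * b⁻¹) := by group
    rw [e1, invsq3 hexp b] at h
    have e2 : (b * c) * b⁻¹ = b * c * b⁻¹ := by group
    rwa [e2] at h
  have RHm : ξ b * ξ (c * b) * ξ (c⁻¹ * b) = 1 := by
    have h := hstar c⁻¹ b
    have e1 : c⁻¹⁻¹ * b = c * b := by group
    rwa [e1] at h
  have RWm : ξ 1 * ξ (c⁻¹ * b) * ξ (b⁻¹ * c) = 1 := by
    have h := hstar (b⁻¹ * c) 1
    have e1 : (b⁻¹ * c)⁻¹ * 1 = c⁻¹ * b := by group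
    rwa [e1, mul_one] at h
  have RIm : ξ c * ξ (b⁻¹ * c) * ξ (b * c) = 1 := hstar b c
  -- the abelian computation
  have habs :
      -(Additive.ofMul (ξ b)) + Additive.ofMul (ξ (c * b)) + -(Additive.ofMul (ξ c))
        = -(Additive.ofMul (ξ (c * b * c⁻¹ * b⁻¹))) :=
    abstract_add (Additive.ofMul (ξ 1)) (Additive.ofMul (ξ b)) (Additive.ofMul (ξ c))
      (Additive.ofMul (ξ (b * c))) (Additive.ofMul (ξ (c * b)))
      (Additive.ofMul (ξ ((b * c)⁻¹))) (Additive.ofMul (ξ b⁻¹))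
      (Additive.ofMul (ξ (c * b⁻¹))) (Additive.ofMul (ξ (b * c * b⁻¹)))
      (Additive.ofMul (ξ (b⁻¹ * c * b⁻¹))) (Additive.ofMul (ξ (c⁻¹ * b)))
      (Additive.ofMul (ξ (b⁻¹ * c))) (Additive.ofMul (ξ (c * b * c⁻¹ * b⁻¹)))
      (addify RAm) (addify RBm) (addify RCm) (addify RDm) (addify REm)
      (addify RGm) (addify RHm) (addify RWm) (addify RIm)
      (addify (hcube b)) (addify (hcube c)) (addify (hcube (b * c)))
      (addify (hcube (c * b)))
  have hAeq : (ξ b)⁻¹ * ξ (c * b) * (ξ c)⁻¹ = (ξ (c * b * c⁻¹ * b⁻¹))⁻¹ := by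
    apply Additive.ofMul.injective
    simpa only [ofMul_mul, ofMul_inv] using habs
  have hval : (b * x * b⁻¹)⁻¹ * ((c * b) * x * (c * b)⁻¹) * (c * x * c⁻¹)⁻¹
      = ((c * b * c⁻¹ * b⁻¹) * x * (c * b * c⁻¹ * b⁻¹)⁻¹)⁻¹ := by
    have := congrArg (Subtype.val) hAeq
    exact this
  calc ⁅⁅x, b⁆, c⁆
      = x * ((b * x * b⁻¹)⁻¹ * ((c * b) * x * (c * b)⁻¹) * (c * x * c⁻¹)⁻¹) := by
        simp only [commutatorElement_def]; group
    _ = x * (((c * b * c⁻¹ * b⁻¹) * x * (c * b * c⁻¹ * b⁻¹)⁻¹)⁻¹) := by rw [hval]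
    _ = ⁅x, ⁅c, b⁆⁆ := by simp only [commutatorElement_def]; group

private lemma swap23 (hexp : ∀ x : G, x ^ 3 = 1) (x b c : G) :
    ⁅⁅x, b⁆, c⁆ = ⁅⁅x, c⁆, b⁆⁻¹ := by
  calc ⁅⁅x, b⁆, c⁆ = ⁅x, ⁅c, b⁆⁆ := P1 hexp x b c
    _ = ⁅x, ⁅b, c⁆⁻¹⁆ := by rw [← commutatorElement_inv b c]
    _ = ⁅x, ⁅b, c⁆⁆⁻¹ := inv_right3 hexp x ⁅b, c⁆
    _ = ⁅⁅x, c⁆, b⁆⁻¹ := by rw [← P1 hexp x c b]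

private lemma swap12 (hexp : ∀ x : G, x ^ 3 = 1) (a b c : G) :
    ⁅⁅a, b⁆, c⁆ = ⁅⁅b, a⁆, c⁆⁻¹ := by
  calc ⁅⁅a, b⁆, c⁆ = ⁅⁅b, a⁆⁻¹, c⁆ := by rw [commutatorElement_inv]
    _ = ⁅⁅b, a⁆, c⁆⁻¹ := inv_left3 hexp ⁅b, a⁆ c

private lemma cyc3 (hexp : ∀ x : G, x ^ 3 = 1) (p q r : G) :
    ⁅⁅p, q⁆, r⁆ = ⁅⁅q, r⁆, p⁆ := by
  calc ⁅⁅p, q⁆, r⁆ = ⁅⁅q, p⁆, r⁆⁻¹ := swap12 hexp p q r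
    _ = (⁅⁅q, r⁆, p⁆⁻¹)⁻¹ := by rw [swap23 hexp q p r]
    _ = ⁅⁅q, r⁆, p⁆ := inv_inv _

private lemma cyc3' (hexp : ∀ x : G, x ^ 3 = 1) (p q r : G) :
    ⁅⁅p, q⁆, r⁆ = ⁅⁅r, p⁆, q⁆ :=
  (cyc3 hexp p q r).trans (cyc3 hexp q r p)

private lemma quad (hexp : ∀ x : G, x ^ 3 = 1) (x b c d : G) :
    ⁅⁅⁅x, b⁆, c⁆, d⁆ = ⁅⁅x, b⁆, ⁅d, c⁆⁆ :=
  P1 hexp ⁅x, b⁆ c d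

private lemma swap34 (hexp : ∀ x : G, x ^ 3 = 1) (X p q : G) :
    ⁅X, ⁅p, q⁆⁆ = ⁅X, ⁅q, p⁆⁆⁻¹ := by
  calc ⁅X, ⁅p, q⁆⁆ = ⁅X, ⁅q, p⁆⁻¹⁆ := by rw [commutatorElement_inv]
    _ = ⁅X, ⁅q, p⁆⁆⁻¹ := inv_right3 hexp X _

private lemma rho1 (hexp : ∀ x : G, x ^ 3 = 1) (a b c d : G) :
    ⁅⁅a, b⁆, ⁅c, d⁆⁆ = ⁅⁅c, d⁆, ⁅b, a⁆⁆ := by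
  calc ⁅⁅a, b⁆, ⁅c, d⁆⁆ = ⁅⁅⁅c, d⁆, a⁆, b⁆ := cyc3' hexp a b ⁅c, d⁆
    _ = ⁅⁅c, d⁆, ⁅b, a⁆⁆ := quad hexp c d a b

private lemma rho2 (hexp : ∀ x : G, x ^ 3 = 1) (a b c d : G) :
    ⁅⁅a, b⁆, ⁅c, d⁆⁆ = ⁅⁅b, d⁆, ⁅a, c⁆⁆ := by
  calc ⁅⁅a, b⁆, ⁅c, d⁆⁆ = ⁅⁅b, ⁅c, d⁆⁆, a⁆ := cyc3 hexp a b ⁅c, d⁆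
    _ = ⁅⁅⁅b, d⁆, c⁆, a⁆ := by rw [← P1 hexp b d c]
    _ = ⁅⁅b, d⁆, ⁅a, c⁆⁆ := quad hexp b d c a

private lemma lam (hexp : ∀ x : G, x ^ 3 = 1) (a b c d : G) :
    ⁅⁅a, b⁆, ⁅c, d⁆⁆ = ⁅⁅a, c⁆, ⁅d, b⁆⁆ :=
  (rho2 hexp a b c d).trans (rho1 hexp b d a c)

/-- `⁅⁅a,b⁆,⁅c,d⁆⁆ = 1`. -/
private lemma sq_cube_eq_one {w : G} (h3 : w ^ 3 = 1) (h2 : w * w = 1) : w = 1 := by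
  calc w = w ^ 3 * (w * w)⁻¹ := by group
    _ = 1 * (1 : G)⁻¹ := by rw [h3, h2]
    _ = 1 := by group

private lemma Sone (hexp : ∀ x : G, x ^ 3 = 1) (a b c d : G) :
    ⁅⁅a, b⁆, ⁅c, d⁆⁆ = 1 := by
  have hSS : ⁅⁅a, b⁆, ⁅c, d⁆⁆ = ⁅⁅a, b⁆, ⁅c, d⁆⁆⁻¹ := by
    calc ⁅⁅a, b⁆, ⁅c, d⁆⁆ = ⁅⁅a, c⁆, ⁅d, b⁆⁆ := lam hexp a b c d
      _ = ⁅⁅c, a⁆, ⁅d, b⁆⁆⁻¹ := swap12 hexp a c ⁅d, b⁆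
      _ = ⁅⁅c, d⁆, ⁅b, a⁆⁆⁻¹ := by rw [lam hexp c a d b]
      _ = (⁅⁅c, d⁆, ⁅a, b⁆⁆⁻¹)⁻¹ := by rw [swap34 hexp ⁅c, d⁆ b a]
      _ = ⁅⁅c, d⁆, ⁅a, b⁆⁆ := inv_inv _
      _ = ⁅⁅a, b⁆, ⁅c, d⁆⁆⁻¹ := (commutatorElement_inv ⁅a, b⁆ ⁅c, d⁆).symm
  have h2 : ⁅⁅a, b⁆, ⁅c, d⁆⁆ * ⁅⁅a, b⁆, ⁅c, d⁆⁆ = 1 := by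
    nth_rewrite 1 [hSS]
    exact inv_mul_cancel _
  exact sq_cube_eq_one (hexp _) h2

end Aux

/-- In a group of exponent 3 every triple commutator `((a,b),c)` is central,
`((a,b),(c,d)) = 1` for all `a, b, c, d`, and `((a,b),c)` is alternating: it transforms by the
sign character under permutations of `a, b, c`. -/
theorem stmt_11 {G : Type*} [Group G] (hexp : ∀ x : G, x ^ 3 = 1) :
    ∀ a b c d : G,
      ⁅⁅a, b⁆, c⁆ ∈ Subgroup.center G ∧
      ⁅⁅a, b⁆, ⁅c, d⁆⁆ = 1 ∧
      ⁅⁅a, b⁆, c⁆ = ⁅⁅b, c⁆, a⁆ ∧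
      ⁅⁅a, b⁆, c⁆ = ⁅⁅c, a⁆, b⁆ ∧
      ⁅⁅a, b⁆, c⁆ = ⁅⁅b, a⁆, c⁆⁻¹ := by
  intro a b c d
  refine ⟨?_, Sone hexp a b c d, cyc3 hexp a b c, cyc3' hexp a b c, swap12 hexp a b c⟩
  rw [Subgroup.mem_center_iff]
  intro g
  have hq : ⁅⁅⁅a, b⁆, c⁆, g⁆ = 1 := (quad hexp a b c g).trans (Sone hexp a b g c)
  exact (commOfComm hq).symm
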